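/- Let 0 < H₁ ≤ H_e < H₂ be normalized channel gains of user 1, the eavesdropper, and user 2, respectively, and let p₁ ≥ 0, p₂ ≥ 0 be the allocated powers. Define the SINRs γ_{1→1} = H₁·p₁/(H₁·p₂ + 1), γ_{1→e} = H_e·p₁/(H_e·p₂ + 1), γ_{2→2} = H₂·p₂, γ_{2→e} = H_e·p₂, and the secrecy rates R_k^s = max{0, (1/2)·log₂(1 + γ_{k→k}) − (1/2)·log₂(1 + γ_{k→e})} for k = 1, 2. Then the secrecy sum-rate satisfies R₁^s + R₂^s = (1/2)·log₂((1 + H₂·p₂)/(1 + H_e·p₂)). -/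
import Mathlib


/-- In the two-user NOMA system with ordered gains H₁ ≤ H_e < H₂, the
secrecy sum-rate equals (1/2)·log₂((1 + H₂·p₂)/(1 + H_e·p₂)). -/
theorem secrecy_sum_rate_two_user (H1 He H2 p1 p2 : ℝ)
    (hH1 : 0 < H1) (h1e : H1 ≤ He) (he2 : He < H2) (hp1 : 0 ≤ p1) (hp2 : 0 ≤ p2) :
    max 0 ((1/2) * Real.logb 2 (1 + H1 * p1 / (H1 * p2 + 1)) -
           (1/2) * Real.logb 2 (1 + He * p1 / (He * p2 + 1))) +
    max 0 ((1/2) * Real.logb 2 (1 + H2 * p2) -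
           (1/2) * Real.logb 2 (1 + He * p2))
      = (1/2) * Real.logb 2 ((1 + H2 * p2) / (1 + He * p2)) := by
  have hHe : 0 < He := lt_of_lt_of_le hH1 h1e
  have hH2 : 0 < H2 := lt_trans hHe he2
  have hd1 : 0 < H1 * p2 + 1 := by positivity
  have hde : 0 < He * p2 + 1 := by positivity
  -- first max is 0
  have hmono : H1 * p1 / (H1 * p2 + 1) ≤ He * p1 / (He * p2 + 1) := by
    rw [div_le_div_iff₀ hd1 hde]
    nlinarith [mul_le_mul_of_nonneg_right h1e hp1]
  have h1 : (1/2) * Real.logb 2 (1 + H1 * p1 / (H1 * p2 + 1)) ≤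
      (1/2) * Real.logb 2 (1 + He * p1 / (He * p2 + 1)) := by
    have hpos : (0:ℝ) < 1 + H1 * p1 / (H1 * p2 + 1) := by positivity
    gcongr
    all_goals first | norm_num | linarith
  rw [max_eq_left (by linarith)]
  -- second max is the difference
  have hlog2 : Real.logb 2 (1 + He * p2) ≤ Real.logb 2 (1 + H2 * p2) := by
    have hpos : (0:ℝ) < 1 + He * p2 := by positivity
    gcongr
    all_goals first | norm_num | nlinarith
  rw [max_eq_right (by linarith)]
  have h2pos : (0:ℝ) < 1 + H2 * p2 := by positivity
  have hepos : (0:ℝ) < 1 + He * p2 := by positivity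
  rw [Real.logb_div (ne_of_gt h2pos) (ne_of_gt hepos)]
  ring
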